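/- In the Calkin algebra on H, the image π(B) is invertible and its inverse is (1 − q)·π(A). -/

import Mathlib

open scoped ENNReal

noncomputable section

abbrev H2 : Type := lp (fun _ : ℕ => ℂ) 2

def Phi (n : ℕ) : H2 := lp.single 2 n 1

lemma norm_Phi (n : ℕ) : ‖Phi n‖ = 1 := by
  have := lp.norm_single (p := (2 : ℝ≥0∞)) (E := fun _ : ℕ => ℂ) (by norm_num)
    n (1 : ℂ)
  simpa [Phi] using this

/-- Coordinate evaluation as a continuous linear functional on `H2`. -/
def evalCLM (n : ℕ) : H2 →L[ℂ] ℂ :=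
  LinearMap.mkContinuous
    { toFun := fun f => f n
      map_add' := fun f g => by
        have := lp.coeFn_add (p := (2 : ℝ≥0∞)) f g
        simp [congrFun this n]
      map_smul' := fun c f => by
        have := lp.coeFn_smul (p := (2 : ℝ≥0∞)) c f
        simp [congrFun this n] }
    1 (fun f => by
      simpa using lp.norm_apply_le_norm (p := (2 : ℝ≥0∞)) (by norm_num) f n)

@[simp] lemma evalCLM_apply (n : ℕ) (f : H2) : evalCLM n f = f n := rfl

lemma rankOne_compact (φ : H2 →L[ℂ] ℂ) (v : H2) :
    IsCompactOperator ⇑(φ.smulRight v) := by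
  refine ⟨(fun a : ℂ => a • v) '' Metric.closedBall 0 1,
    (isCompact_closedBall 0 1).image (by continuity), ?_⟩
  have h1 : φ ⁻¹' Metric.closedBall 0 1 ∈ (nhds (0 : H2)) := by
    have : Metric.closedBall (0 : ℂ) 1 ∈ nhds (φ 0) := by
      simpa using Metric.closedBall_mem_nhds (0 : ℂ) one_pos
    exact φ.continuous.continuousAt.preimage_mem_nhds this
  refine Filter.mem_of_superset h1 ?_
  intro x hx
  exact ⟨φ x, hx, by simp⟩

/-- A bounded operator that is diagonal with geometrically decaying entries
is compact. -/
lemma diag_compact (s : ℝ) (hs0 : 0 ≤ s) (hs1 : s < 1) (c : ℕ → ℂ)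
    (hc : ∀ n, ‖c n‖ ≤ s ^ n * s ^ n) (T : H2 →L[ℂ] H2)
    (hT : ∀ n, T (Phi n) = c n • Phi n) : IsCompactOperator ⇑T := by
  set F : ℕ → (H2 →L[ℂ] H2) :=
    fun N => ∑ n ∈ Finset.range N, (evalCLM n).smulRight (c n • Phi n) with hF
  have hFcompact : ∀ N, IsCompactOperator ⇑(F N) := by
    intro N
    induction N with
    | zero => simpa [hF] using isCompactOperator_zero
    | succ N ih =>
        have hstep : F (N + 1) = F N + (evalCLM N).smulRight (c N • Phi N) := by
          simp [hF, Finset.sum_range_succ]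
        rw [hstep]
        have := ih.add (rankOne_compact (evalCLM N) (c N • Phi N))
        simpa using this
  -- the series expansion of T f
  have key : ∀ f : H2, HasSum (fun n => (f n * c n) • Phi n) (T f) := by
    intro f
    have h0 : HasSum (fun n => lp.single 2 n (f n)) f :=
      lp.hasSum_single (by norm_num) f
    have h1 := h0.mapL T
    have heq : (fun n => T (lp.single 2 n (f n))) = fun n => (f n * c n) • Phi n := by
      funext n
      have hsingle : lp.single (E := fun _ : ℕ => ℂ) 2 n (f n) = f n • Phi n := by
        have := lp.single_smul (E := fun _ : ℕ => ℂ) 2 n (f n) (1 : ℂ)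
        simpa [Phi] using this
      rw [hsingle, map_smul, hT n, smul_smul]
    rwa [heq] at h1
  -- norm estimate for the truncation error
  have hbound : ∀ N, ∀ f : H2, ‖T f - F N f‖ ≤ s ^ N * (1 - s)⁻¹ * ‖f‖ := by
    intro N f
    set g1 : ℕ → H2 :=
      fun n => if n ∈ Finset.range N then (f n * c n) • Phi n else 0 with hg1
    have hsumF : F N f = ∑ n ∈ Finset.range N, (f n * c n) • Phi n := by
      simp [hF, ContinuousLinearMap.sum_apply, ContinuousLinearMap.smulRight_apply,
        smul_smul]
    have hsum_eq : ∑ n ∈ Finset.range N, g1 n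
        = ∑ n ∈ Finset.range N, (f n * c n) • Phi n :=
      Finset.sum_congr rfl (fun n hn => by simp only [hg1]; rw [if_pos hn])
    have hFNf : HasSum g1 (F N f) := by
      rw [hsumF, ← hsum_eq]
      exact hasSum_sum_of_ne_finset_zero (by intro n hn; simp only [hg1]; rw [if_neg hn])
    have hdiff := (key f).sub hFNf
    set d : ℕ → H2 := fun n => (f n * c n) • Phi n - g1 n with hd
    have hb : ∀ n, ‖d n‖ ≤ ‖f‖ * s ^ N * s ^ n := by
      intro n
      by_cases hn : n ∈ Finset.range N
      · have hdn : d n = 0 := by simp only [hd, hg1]; rw [if_pos hn, sub_self]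
        rw [hdn]
        simp only [norm_zero]
        positivity
      · have hNn : N ≤ n := by
          by_contra hcon
          exact hn (Finset.mem_range.2 (lt_of_not_ge hcon))
        have hdn : d n = (f n * c n) • Phi n := by simp only [hd, hg1]; rw [if_neg hn, sub_zero]
        rw [hdn, norm_smul, norm_Phi, mul_one, norm_mul]
        have h1 : ‖(f : ∀ _ : ℕ, ℂ) n‖ ≤ ‖f‖ :=
          lp.norm_apply_le_norm (p := (2 : ℝ≥0∞)) (by norm_num) f n
        have h2 : ‖c n‖ ≤ s ^ n * s ^ n := hc n
        have h3 : s ^ n ≤ s ^ N := pow_le_pow_of_le_one hs0 hs1.le hNn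
        calc ‖(f : ∀ _ : ℕ, ℂ) n‖ * ‖c n‖ ≤ ‖f‖ * (s ^ n * s ^ n) :=
              mul_le_mul h1 h2 (norm_nonneg _) (norm_nonneg _)
          _ ≤ ‖f‖ * (s ^ N * s ^ n) := by
              have : s ^ n * s ^ n ≤ s ^ N * s ^ n :=
                mul_le_mul_of_nonneg_right h3 (pow_nonneg hs0 n)
              exact mul_le_mul_of_nonneg_left this (norm_nonneg f)
          _ = ‖f‖ * s ^ N * s ^ n := by ring
    have hgeo : Summable (fun n : ℕ => ‖f‖ * s ^ N * s ^ n) :=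
      (summable_geometric_of_lt_one hs0 hs1).mul_left _
    have hnorm : Summable (fun n => ‖d n‖) :=
      Summable.of_nonneg_of_le (fun n => norm_nonneg _) hb hgeo
    calc ‖T f - F N f‖ = ‖∑' n, d n‖ := by rw [hdiff.tsum_eq]
      _ ≤ ∑' n, ‖d n‖ := norm_tsum_le_tsum_norm hnorm
      _ ≤ ∑' n, ‖f‖ * s ^ N * s ^ n := Summable.tsum_le_tsum hb hnorm hgeo
      _ = ‖f‖ * s ^ N * (1 - s)⁻¹ := by
          rw [tsum_mul_left, tsum_geometric_of_lt_one hs0 hs1]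
      _ = s ^ N * (1 - s)⁻¹ * ‖f‖ := by ring
  have hinv : (0 : ℝ) ≤ (1 - s)⁻¹ := by
    have : (0 : ℝ) < 1 - s := by linarith
    positivity
  have hop : ∀ N, ‖T - F N‖ ≤ s ^ N * (1 - s)⁻¹ := by
    intro N
    refine ContinuousLinearMap.opNorm_le_bound _ (by positivity) (fun f => ?_)
    simpa using hbound N f
  have htend : Filter.Tendsto F Filter.atTop (nhds T) := by
    rw [tendsto_iff_norm_sub_tendsto_zero]
    refine squeeze_zero (g := fun N => s ^ N * (1 - s)⁻¹) (fun N => norm_nonneg _)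
      (fun N => (norm_sub_rev _ _).le.trans (hop N)) ?_
    have := (tendsto_pow_atTop_nhds_zero_of_lt_one hs0 hs1).mul_const (1 - s)⁻¹
    simpa using this
  exact isCompactOperator_of_tendsto htend (Filter.Eventually.of_forall hFcompact)

/-- In the Calkin algebra on `H` (realized as any unital `ℂ`-algebra quotient of
`B(H)` by exactly the compact operators, via a surjective algebra homomorphism `π`
whose kernel consists precisely of the compact operators), the image `π(B)` is
invertible with inverse `(1 − q)·π(A)`. -/
theorem stmt_14 (q : ℝ) (hq0 : 0 < q) (hq1 : q < 1)
    (A B : H2 →L[ℂ] H2)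
    (hB : ∀ n : ℕ, B (Phi n) = (Real.sqrt ((1 - q ^ (n + 1)) / (1 - q)) : ℂ) • Phi (n + 1))
    (hA0 : A (Phi 0) = 0)
    (hA : ∀ n : ℕ, A (Phi (n + 1)) = (Real.sqrt ((1 - q ^ (n + 1)) / (1 - q)) : ℂ) • Phi n)
    (Q : Type) [Ring Q] [Algebra ℂ Q] (π : (H2 →L[ℂ] H2) →ₐ[ℂ] Q)
    (hπsurj : Function.Surjective π)
    (hπker : ∀ T : H2 →L[ℂ] H2, π T = 0 ↔ IsCompactOperator (⇑T)) :
    π B * (((1 : ℂ) - q) • π A) = 1 ∧ (((1 : ℂ) - q) • π A) * π B = 1 := by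
  have hqs : (0 : ℝ) ≤ q := hq0.le
  set s : ℝ := Real.sqrt q with hs
  have hs0 : (0 : ℝ) ≤ s := Real.sqrt_nonneg q
  have hs1 : s < 1 := by
    rw [hs, show (1 : ℝ) = Real.sqrt 1 from Real.sqrt_one.symm]
    exact Real.sqrt_lt_sqrt hqs hq1
  have hss : ∀ n : ℕ, s ^ n * s ^ n = q ^ n := by
    intro n
    rw [← mul_pow, Real.mul_self_sqrt hqs]
  have hqne : (1 - q : ℝ) ≠ 0 := by linarith
  have hxnn : ∀ n : ℕ, (0 : ℝ) ≤ (1 - q ^ (n + 1)) / (1 - q) := by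
    intro n
    have h1 : q ^ (n + 1) ≤ 1 := pow_le_one₀ hqs hq1.le
    have h2 : (0 : ℝ) < 1 - q := by linarith
    exact div_nonneg (by linarith) h2.le
  have hx : ∀ n : ℕ,
      ((Real.sqrt ((1 - q ^ (n + 1)) / (1 - q)) : ℂ))
        * ((Real.sqrt ((1 - q ^ (n + 1)) / (1 - q)) : ℂ))
      = (((1 - q ^ (n + 1)) / (1 - q) : ℝ) : ℂ) := by
    intro n
    rw [← Complex.ofReal_mul, Real.mul_self_sqrt (hxnn n)]
  have hscal : ∀ n : ℕ,
      ((1 : ℂ) - q) * (((1 - q ^ (n + 1)) / (1 - q) : ℝ) : ℂ)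
        = 1 - (q : ℂ) ^ (n + 1) := by
    intro n
    have : ((1 : ℂ) - q) ≠ 0 := by
      intro h
      apply hqne
      have := congrArg Complex.re h
      simpa using this
    push_cast
    field_simp
  -- (1-q)·B∘A - 1 is diagonal with entries -q^n
  have hT1 : ∀ n : ℕ, (((1 : ℂ) - q) • (B * A) - 1) (Phi n)
      = (-(q : ℂ) ^ n) • Phi n := by
    intro n
    cases n with
    | zero =>
        simp [ContinuousLinearMap.sub_apply, ContinuousLinearMap.smul_apply,
          ContinuousLinearMap.mul_apply, hA0, ContinuousLinearMap.one_apply]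
    | succ n =>
        have hBA : (B * A) (Phi (n + 1))
            = (((1 - q ^ (n + 1)) / (1 - q) : ℝ) : ℂ) • Phi (n + 1) := by
          rw [ContinuousLinearMap.mul_apply, hA n, map_smul, hB n, smul_smul, hx n]
        rw [ContinuousLinearMap.sub_apply, ContinuousLinearMap.smul_apply, hBA,
          smul_smul, hscal n, ContinuousLinearMap.one_apply,
          show Phi (n + 1) = (1 : ℂ) • Phi (n + 1) from (one_smul ℂ _).symm, smul_smul,
          ← sub_smul]
        norm_num
  -- (1-q)·A∘B - 1 is diagonal with entries -q^(n+1)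
  have hT2 : ∀ n : ℕ, (((1 : ℂ) - q) • (A * B) - 1) (Phi n)
      = (-(q : ℂ) ^ (n + 1)) • Phi n := by
    intro n
    have hAB : (A * B) (Phi n)
        = (((1 - q ^ (n + 1)) / (1 - q) : ℝ) : ℂ) • Phi n := by
      rw [ContinuousLinearMap.mul_apply, hB n, map_smul, hA n, smul_smul, hx n]
    rw [ContinuousLinearMap.sub_apply, ContinuousLinearMap.smul_apply, hAB,
      smul_smul, hscal n, ContinuousLinearMap.one_apply,
      show Phi n = (1 : ℂ) • Phi n from (one_smul ℂ _).symm, smul_smul, ← sub_smul]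
    norm_num
  have hnorm1 : ∀ n : ℕ, ‖(-(q : ℂ) ^ n)‖ ≤ s ^ n * s ^ n := by
    intro n
    rw [hss n, norm_neg, norm_pow, Complex.norm_real, Real.norm_eq_abs,
      abs_of_pos hq0]
  have hnorm2 : ∀ n : ℕ, ‖(-(q : ℂ) ^ (n + 1))‖ ≤ s ^ n * s ^ n := by
    intro n
    rw [hss n, norm_neg, norm_pow, Complex.norm_real, Real.norm_eq_abs,
      abs_of_pos hq0]
    calc q ^ (n + 1) = q ^ n * q := pow_succ q n
      _ ≤ q ^ n * 1 := by nlinarith [pow_nonneg hqs n]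
      _ = q ^ n := mul_one _
  have hc1 : IsCompactOperator ⇑(((1 : ℂ) - q) • (B * A) - 1) :=
    diag_compact s hs0 hs1 _ hnorm1 _ hT1
  have hc2 : IsCompactOperator ⇑(((1 : ℂ) - q) • (A * B) - 1) :=
    diag_compact s hs0 hs1 _ hnorm2 _ hT2
  have hz1 : π (((1 : ℂ) - q) • (B * A) - 1) = 0 := (hπker _).2 hc1
  have hz2 : π (((1 : ℂ) - q) • (A * B) - 1) = 0 := (hπker _).2 hc2
  have he1 : ((1 : ℂ) - q) • (π B * π A) - 1 = 0 := by
    simpa [map_sub, map_smul, map_mul, map_one] using hz1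
  have he2 : ((1 : ℂ) - q) • (π A * π B) - 1 = 0 := by
    simpa [map_sub, map_smul, map_mul, map_one] using hz2
  constructor
  · rw [mul_smul_comm]
    exact sub_eq_zero.mp he1
  · rw [smul_mul_assoc]
    exact sub_eq_zero.mp he2

end
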